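/- arXiv:2512.24667 — 2 statements merged into one kernel-verified Lean document; each statement's English description precedes it below -/
import Mathlib

section
/- The total objective Φ has Lipschitz gradient: for all x1, x2 ∈ ℝ^{d1}, ‖∇Φ(x1) − ∇Φ(x2)‖ ≤ L_f ‖x1 − x2‖, where L_f = l_{f,1} + l_{g,1}(l_{f,1} + M_f)/μ_g + (l_{f,0}/μ_g)(l_{g,2} + l_{g,1}l_{g,2}/μ_g) and M_f = l_{f,1} + l_{g,1}l_{f,1}/μ_g + (l_{f,0}/μ_g)(l_{g,2} + l_{g,1}l_{g,2}/μ_g). -/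
open scoped RealInnerProductSpace
open scoped Topology

noncomputable section

abbrev Vec (d : ℕ) := EuclideanSpace ℝ (Fin d)

set_option maxHeartbeats 4000000


lemma sqrt_le_add (a b : ℝ) (ha : 0 ≤ a) (hb : 0 ≤ b) :
    Real.sqrt (a ^ 2 + b ^ 2) ≤ a + b := by
  rw [show a ^2 + b^2 = (a+b)^2 - 2*(a*b) by ring]
  calc Real.sqrt ((a+b)^2 - 2*(a*b)) ≤ Real.sqrt ((a+b)^2) := by
        apply Real.sqrt_le_sqrt; nlinarith [mul_nonneg ha hb]
    _ = a + b := by rw [Real.sqrt_sq (by positivity)]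

lemma le_sqrt_left (a b : ℝ) (ha : 0 ≤ a) : a ≤ Real.sqrt (a ^ 2 + b ^ 2) := by
  rw [show a = Real.sqrt (a^2) by rw [Real.sqrt_sq ha]]
  apply Real.sqrt_le_sqrt; nlinarith [sq_nonneg b, Real.sq_sqrt (sq_nonneg a)]

lemma le_sqrt_right (a b : ℝ) (hb : 0 ≤ b) : b ≤ Real.sqrt (a ^ 2 + b ^ 2) := by
  rw [add_comm]; exact le_sqrt_left b a hb

-- average norm bound
lemma avg_norm_le {E : Type*} [SeminormedAddCommGroup E] [NormedSpace ℝ E] {N : ℕ}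
    (hN : 0 < N) (a : Fin N → E) (B : ℝ) (h : ∀ i, ‖a i‖ ≤ B) :
    ‖(N : ℝ)⁻¹ • ∑ i, a i‖ ≤ B := by
  have hB : 0 ≤ B := le_trans (norm_nonneg _) (h ⟨0, hN⟩)
  rw [norm_smul]
  calc ‖(N:ℝ)⁻¹‖ * ‖∑ i, a i‖ ≤ (N:ℝ)⁻¹ * ∑ i, ‖a i‖ := by
        rw [Real.norm_eq_abs, abs_of_nonneg (by positivity)]
        exact mul_le_mul_of_nonneg_left (norm_sum_le _ _) (by positivity)
    _ ≤ (N:ℝ)⁻¹ * (N * B) := by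
        apply mul_le_mul_of_nonneg_left _ (by positivity)
        calc ∑ i, ‖a i‖ ≤ ∑ _i : Fin N, B := Finset.sum_le_sum (fun i _ => h i)
          _ = N * B := by simp [mul_comm]
    _ = B := by field_simp

lemma taylor_seg {F : Type*} [NormedAddCommGroup F] [NormedSpace ℝ F]
    (φ : ℝ → F) (φ' : ℝ → F) (C : ℝ)
    (hd : ∀ t ∈ Set.Icc (0:ℝ) 1, HasDerivAt φ (φ' t) t)
    (hb : ∀ t ∈ Set.Icc (0:ℝ) 1, ‖φ' t - φ' 0‖ ≤ C) :
    ‖φ 1 - φ 0 - φ' 0‖ ≤ C := by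
  have key := norm_image_sub_le_of_norm_deriv_le_segment'
    (f := fun t => φ t - t • φ' 0) (f' := fun t => φ' t - φ' 0) (a := 0) (b := 1) (C := C)
    (fun t ht => (((hd t ht).sub ((hasDerivAt_id t).smul_const (φ' 0))).congr_deriv
      (by simp)).hasDerivWithinAt) (fun t ht => hb t (Set.mem_Icc_of_Ico ht)) 1 (Set.right_mem_Icc.2 zero_le_one)
  simp only [one_smul, zero_smul, sub_zero, mul_one] at key
  calc ‖φ 1 - φ 0 - φ' 0‖ = ‖φ 1 - φ' 0 - φ 0‖ := by rw [sub_right_comm]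
    _ ≤ C := key

lemma exists_inverse_of_coercive {d : ℕ} {μ : ℝ} (hμ : 0 < μ)
    (H : Vec d →L[ℝ] Vec d) (hc : ∀ v, μ * ‖v‖ ^ 2 ≤ ⟪H v, v⟫) :
    ∃ S : Vec d →L[ℝ] Vec d, H.comp S = ContinuousLinearMap.id ℝ (Vec d) ∧
      S.comp H = ContinuousLinearMap.id ℝ (Vec d) ∧ ‖S‖ ≤ μ⁻¹ := by
  have hnorm : ∀ v, μ * ‖v‖ ≤ ‖H v‖ := by
    intro v
    rcases eq_or_ne v 0 with rfl | hv
    · simp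
    · have h1 := hc v
      have h2 : ⟪H v, v⟫ ≤ ‖H v‖ * ‖v‖ := real_inner_le_norm _ _
      have hv' : 0 < ‖v‖ := norm_pos_iff.2 hv
      nlinarith
  have hinj : Function.Injective H := by
    intro a b hab
    have h := hnorm (a - b)
    rw [map_sub, hab, sub_self, norm_zero] at h
    have : ‖a - b‖ = 0 := le_antisymm (by nlinarith [norm_nonneg (a-b)]) (norm_nonneg _)
    rwa [norm_sub_eq_zero_iff] at this
  have hsurj : Function.Surjective H :=
    (LinearMap.injective_iff_surjective (f := (H : Vec d →ₗ[ℝ] Vec d))).1 hinj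
  have hker : H.ker = ⊥ := LinearMap.ker_eq_bot.2 hinj
  have hrange : H.range = ⊤ := LinearMap.range_eq_top.2 hsurj
  let e := ContinuousLinearEquiv.ofBijective H hker hrange
  refine ⟨e.symm.toContinuousLinearMap, ?_, ?_, ?_⟩
  · refine ContinuousLinearMap.ext fun w => ?_
    exact e.apply_symm_apply w
  · refine ContinuousLinearMap.ext fun w => ?_
    exact e.symm_apply_apply w
  · apply ContinuousLinearMap.opNorm_le_bound _ (by positivity)
    intro w
    have h1 : H (e.symm w) = w := e.apply_symm_apply w
    have h2 := hnorm (e.symm w)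
    rw [h1] at h2
    calc ‖e.symm.toContinuousLinearMap w‖ = ‖e.symm w‖ := rfl
      _ ≤ μ⁻¹ * ‖w‖ := by
          rw [inv_mul_eq_div, le_div_iff₀ hμ, mul_comm]
          exact h2

lemma norm_adjoint_eq {d e : ℕ} (A : Vec d →L[ℝ] Vec e) :
    ‖ContinuousLinearMap.adjoint A‖ = ‖A‖ :=
  LinearIsometryEquiv.norm_map _ A

lemma hasGradientAt_of_quadratic {d : ℕ} (Φ : Vec d → ℝ) (x : Vec d) (hv : Vec d) (C : ℝ)
    (hb : ∀ x', |Φ x' - Φ x - ⟪hv, x' - x⟫| ≤ C * ‖x' - x‖ ^ 2) :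
    HasGradientAt Φ hv x := by
  rw [hasGradientAt_iff_hasFDerivAt]
  rw [hasFDerivAt_iff_isLittleO_nhds_zero]
  rw [Asymptotics.isLittleO_iff]
  intro c hc
  set C₀ := max C 1 with hC₀
  have hC₀pos : 0 < C₀ := lt_of_lt_of_le one_pos (le_max_right _ _)
  have hball : ∀ᶠ h : Vec d in 𝓝 0, ‖h‖ < c / C₀ := by
    have : Metric.ball (0 : Vec d) (c / C₀) ∈ 𝓝 (0 : Vec d) :=
      Metric.ball_mem_nhds _ (by positivity)
    filter_upwards [this] with h hh
    simpa using hh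
  filter_upwards [hball] with h hh
  have hb' := hb (x + h)
  simp only [add_sub_cancel_left] at hb'
  have : |Φ (x + h) - Φ x - ⟪hv, h⟫| ≤ C₀ * ‖h‖ ^ 2 := by
    refine hb'.trans ?_
    apply mul_le_mul_of_nonneg_right (le_max_left _ _) (by positivity)
  calc ‖Φ (x + h) - Φ x - (InnerProductSpace.toDual ℝ (Vec d) hv) h‖
      = |Φ (x + h) - Φ x - ⟪hv, h⟫| := by rw [InnerProductSpace.toDual_apply_apply]; rfl
    _ ≤ C₀ * ‖h‖ ^ 2 := this
    _ = (C₀ * ‖h‖) * ‖h‖ := by ring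
    _ ≤ c * ‖h‖ := by
        apply mul_le_mul_of_nonneg_right _ (norm_nonneg _)
        rw [mul_comm]
        exact le_of_lt ((lt_div_iff₀ hC₀pos).1 hh)

lemma coercive_of_monotone {d : ℕ} {μ : ℝ} (G : Vec d → Vec d) (H : Vec d →L[ℝ] Vec d)
    (y : Vec d) (hH : HasFDerivAt G H y)
    (hmono : ∀ y', μ * ‖y' - y‖ ^ 2 ≤ ⟪G y' - G y, y' - y⟫) :
    ∀ v, μ * ‖v‖ ^ 2 ≤ ⟪H v, v⟫ := by
  intro v
  have hline : HasDerivAt (fun t : ℝ => y + t • v) v 0 := by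
    simpa using ((hasDerivAt_id (0:ℝ)).smul_const v).const_add y
  have hcomp : HasDerivAt (fun t : ℝ => G (y + t • v)) (H v) 0 :=
    HasFDerivAt.comp_hasDerivAt 0 (by simpa using hH : HasFDerivAt G H (y + (0:ℝ) • v)) hline
  have hψ : HasDerivAt (fun t : ℝ => ⟪G (y + t • v), v⟫) ⟪H v, v⟫ 0 := by
    simpa using hcomp.inner ℝ (hasDerivAt_const (0:ℝ) v)
  have hslope := hasDerivAt_iff_tendsto_slope.1 hψ
  have hslope' : Filter.Tendsto (slope (fun t : ℝ => ⟪G (y + t • v), v⟫) 0) (𝓝[>] 0)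
      (𝓝 ⟪H v, v⟫) := hslope.mono_left (nhdsWithin_mono _ (fun t ht => ne_of_gt ht))
  refine ge_of_tendsto hslope' ?_
  filter_upwards [self_mem_nhdsWithin] with t (ht : 0 < t)
  have hm := hmono (y + t • v)
  have hsub : y + t • v - y = t • v := by abel
  rw [hsub] at hm
  have hinner : ⟪G (y + t • v) - G y, t • v⟫ = t * ⟪G (y + t • v) - G y, v⟫ :=
    real_inner_smul_right _ _ _
  have hnorm : ‖t • v‖ ^ 2 = t ^ 2 * ‖v‖ ^ 2 := by
    rw [norm_smul]; rw [Real.norm_eq_abs]; rw [mul_pow, sq_abs]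
  rw [hinner, hnorm] at hm
  have hG0 : G (y + (0:ℝ) • v) = G y := by simp
  have : slope (fun t : ℝ => ⟪G (y + t • v), v⟫) 0 t
      = (⟪G (y + t • v), v⟫ - ⟪G y, v⟫) / t := by
    rw [slope_def_field]; rw [hG0]; ring
  rw [this]
  rw [le_div_iff₀ ht]
  have : ⟪G (y + t • v), v⟫ - ⟪G y, v⟫ = ⟪G (y + t • v) - G y, v⟫ := by
    rw [inner_sub_left]
  rw [this]
  nlinarith

lemma grad_norm_le {d : ℕ} {φ : Vec d → ℝ} {gv : Vec d} {K : ℝ} (hK : 0 ≤ K) (y : Vec d)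
    (h : HasGradientAt φ gv y) (hlip : ∀ y', |φ y' - φ y| ≤ K * ‖y' - y‖) : ‖gv‖ ≤ K := by
  have := (hasGradientAt_iff_hasFDerivAt.1 h).le_of_lip' hK
    (Filter.Eventually.of_forall (fun y' => by simpa using hlip y'))
  rwa [LinearIsometryEquiv.norm_map] at this

lemma fderiv_norm_le {d e : ℕ} {f : Vec d → Vec e} {D : Vec d →L[ℝ] Vec e} {K : ℝ}
    (hK : 0 ≤ K) (x : Vec d) (h : HasFDerivAt f D x)
    (hlip : ∀ x', ‖f x' - f x‖ ≤ K * ‖x' - x‖) : ‖D‖ ≤ K :=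
  h.le_of_lip' hK (Filter.Eventually.of_forall hlip)

lemma avg_ge {N : ℕ} (hN : 0 < N) (a : Fin N → ℝ) (c : ℝ) (h : ∀ i, c ≤ a i) :
    c ≤ (N : ℝ)⁻¹ * ∑ i, a i := by
  have hNpos : (0:ℝ) < N := Nat.cast_pos.2 hN
  have hsum : (N : ℝ) * c ≤ ∑ i, a i := by
    calc (N : ℝ) * c = ∑ _i : Fin N, c := by simp [mul_comm]
      _ ≤ ∑ i, a i := Finset.sum_le_sum (fun i _ => h i)
  calc c = (N:ℝ)⁻¹ * ((N:ℝ) * c) := by field_simp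
    _ ≤ (N:ℝ)⁻¹ * ∑ i, a i := mul_le_mul_of_nonneg_left hsum (by positivity)

lemma taylor_seg' {F : Type*} [NormedAddCommGroup F] [NormedSpace ℝ F]
    (φ : ℝ → F) (φ' : ℝ → F) (C : ℝ)
    (hd : ∀ t ∈ Set.Icc (0:ℝ) 1, HasDerivAt φ (φ' t) t)
    (hb : ∀ t ∈ Set.Icc (0:ℝ) 1, ‖φ' t - φ' 0‖ ≤ C) :
    ‖φ 1 - φ 0 - φ' 0‖ ≤ C := by
  have key := norm_image_sub_le_of_norm_deriv_le_segment'
    (f := fun t => φ t - t • φ' 0) (f' := fun t => φ' t - φ' 0) (a := 0) (b := 1) (C := C)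
    (fun t ht => (((hd t ht).sub ((hasDerivAt_id t).smul_const (φ' 0))).congr_deriv
      (by simp)).hasDerivWithinAt)
    (fun t ht => hb t (Set.mem_Icc_of_Ico ht)) 1 (Set.right_mem_Icc.2 zero_le_one)
  simp only [one_smul, zero_smul, sub_zero, mul_one] at key
  calc ‖φ 1 - φ 0 - φ' 0‖ = ‖φ 1 - φ' 0 - φ 0‖ := by rw [sub_right_comm]
    _ ≤ C := key

lemma taylor_vec {d e : ℕ} (G : Vec d → Vec e) (D : Vec d → (Vec d →L[ℝ] Vec e)) (L : ℝ)
    (hL : 0 ≤ L) (hD : ∀ x, HasFDerivAt G (D x) x)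
    (hlip : ∀ x1 x2, ‖D x1 - D x2‖ ≤ L * ‖x1 - x2‖) (x x' : Vec d) :
    ‖G x' - G x - D x (x' - x)‖ ≤ L * ‖x' - x‖ ^ 2 := by
  have hl : ∀ t : ℝ, HasDerivAt (fun s : ℝ => x + s • (x' - x)) (x' - x) t := by
    intro t
    simpa using ((hasDerivAt_id t).smul_const (x' - x)).const_add x
  have hd : ∀ t ∈ Set.Icc (0:ℝ) 1, HasDerivAt (fun s : ℝ => G (x + s • (x' - x)))
      ((fun t : ℝ => D (x + t • (x' - x)) (x' - x)) t) t := fun t _ =>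
    (hD (x + t • (x' - x))).comp_hasDerivAt t (hl t)
  have hb : ∀ t ∈ Set.Icc (0:ℝ) 1,
      ‖(fun t : ℝ => D (x + t • (x' - x)) (x' - x)) t
        - (fun t : ℝ => D (x + t • (x' - x)) (x' - x)) 0‖ ≤ L * ‖x' - x‖ ^ 2 := by
    intro t ht
    have h3 := hlip (x + t • (x' - x)) (x + (0:ℝ) • (x' - x))
    have h4 : (x + t • (x' - x)) - (x + (0:ℝ) • (x' - x)) = t • (x' - x) := by
      rw [zero_smul]; abel
    rw [h4, norm_smul, Real.norm_eq_abs, abs_of_nonneg ht.1] at h3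
    calc ‖(fun t : ℝ => D (x + t • (x' - x)) (x' - x)) t
        - (fun t : ℝ => D (x + t • (x' - x)) (x' - x)) 0‖
        = ‖(D (x + t • (x' - x)) - D (x + (0:ℝ) • (x' - x))) (x' - x)‖ := by
          rw [ContinuousLinearMap.sub_apply]
      _ ≤ ‖D (x + t • (x' - x)) - D (x + (0:ℝ) • (x' - x))‖ * ‖x' - x‖ :=
          ContinuousLinearMap.le_opNorm _ _
      _ ≤ L * (t * ‖x' - x‖) * ‖x' - x‖ := mul_le_mul_of_nonneg_right h3 (norm_nonneg _)
      _ ≤ L * ‖x' - x‖ ^ 2 := by nlinarith [norm_nonneg (x' - x), ht.1, ht.2, mul_nonneg hL (sq_nonneg ‖x' - x‖)]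
  have key := taylor_seg' (fun s : ℝ => G (x + s • (x' - x)))
    (fun t : ℝ => D (x + t • (x' - x)) (x' - x)) (L * ‖x' - x‖ ^ 2) hd hb
  have hx1 : x + (1:ℝ) • (x' - x) = x' := by rw [one_smul]; abel
  have hx0 : x + (0:ℝ) • (x' - x) = x := by rw [zero_smul]; abel
  beta_reduce at key
  rw [hx1, hx0] at key
  exact key

lemma taylor_scalar {d : ℕ} (F : Vec d → ℝ) (gr : Vec d → Vec d) (L : ℝ)
    (hL : 0 ≤ L) (hg : ∀ x, HasGradientAt F (gr x) x)
    (hlip : ∀ x1 x2, ‖gr x1 - gr x2‖ ≤ L * ‖x1 - x2‖) (x x' : Vec d) :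
    |F x' - F x - ⟪gr x, x' - x⟫| ≤ L * ‖x' - x‖ ^ 2 := by
  have hl : ∀ t : ℝ, HasDerivAt (fun s : ℝ => x + s • (x' - x)) (x' - x) t := by
    intro t
    simpa using ((hasDerivAt_id t).smul_const (x' - x)).const_add x
  have hd : ∀ t ∈ Set.Icc (0:ℝ) 1, HasDerivAt (fun s : ℝ => F (x + s • (x' - x)))
      ((fun t : ℝ => ⟪gr (x + t • (x' - x)), x' - x⟫) t) t := by
    intro t _
    have h0 := (hasGradientAt_iff_hasFDerivAt.1
      (hg (x + t • (x' - x)))).comp_hasDerivAt t (hl t)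
    simpa [Function.comp_def] using h0
  have hb : ∀ t ∈ Set.Icc (0:ℝ) 1,
      ‖(fun t : ℝ => ⟪gr (x + t • (x' - x)), x' - x⟫) t
        - (fun t : ℝ => ⟪gr (x + t • (x' - x)), x' - x⟫) 0‖ ≤ L * ‖x' - x‖ ^ 2 := by
    intro t ht
    have h3 := hlip (x + t • (x' - x)) (x + (0:ℝ) • (x' - x))
    have h4 : (x + t • (x' - x)) - (x + (0:ℝ) • (x' - x)) = t • (x' - x) := by
      rw [zero_smul]; abel
    rw [h4, norm_smul, Real.norm_eq_abs, abs_of_nonneg ht.1] at h3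
    calc ‖(fun t : ℝ => ⟪gr (x + t • (x' - x)), x' - x⟫) t
        - (fun t : ℝ => ⟪gr (x + t • (x' - x)), x' - x⟫) 0‖
        = |⟪gr (x + t • (x' - x)) - gr (x + (0:ℝ) • (x' - x)), x' - x⟫| := by
          rw [Real.norm_eq_abs]
          rw [show ((fun t : ℝ => ⟪gr (x + t • (x' - x)), x' - x⟫) t
            - (fun t : ℝ => ⟪gr (x + t • (x' - x)), x' - x⟫) 0 : ℝ)
            = ⟪gr (x + t • (x' - x)), x' - x⟫ - ⟪gr (x + (0:ℝ) • (x' - x)), x' - x⟫ from rfl,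
            ← inner_sub_left]
      _ ≤ ‖gr (x + t • (x' - x)) - gr (x + (0:ℝ) • (x' - x))‖ * ‖x' - x‖ :=
          abs_real_inner_le_norm _ _
      _ ≤ L * (t * ‖x' - x‖) * ‖x' - x‖ := mul_le_mul_of_nonneg_right h3 (norm_nonneg _)
      _ ≤ L * ‖x' - x‖ ^ 2 := by nlinarith [norm_nonneg (x' - x), ht.1, ht.2, mul_nonneg hL (sq_nonneg ‖x' - x‖)]
  have key := taylor_seg' (fun s : ℝ => F (x + s • (x' - x)))
    (fun t : ℝ => ⟪gr (x + t • (x' - x)), x' - x⟫) (L * ‖x' - x‖ ^ 2) hd hb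
  have hx1 : x + (1:ℝ) • (x' - x) = x' := by rw [one_smul]; abel
  have hx0 : x + (0:ℝ) • (x' - x) = x := by rw [zero_smul]; abel
  beta_reduce at key
  rw [hx1, hx0, Real.norm_eq_abs] at key
  exact key

/- STATEMENT 1: ∇Φ is L_f-Lipschitz with
   L_f = l_{f,1} + l_{g,1}(l_{f,1}+M_f)/μ_g + (l_{f,0}/μ_g)(l_{g,2} + l_{g,1}l_{g,2}/μ_g). -/
theorem gradPhi_lipschitz
    {d1 d2 N : ℕ} (hN : 0 < N)
    (f g : Fin N → Vec d1 → Vec d2 → ℝ)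
    (μg lf0 lf1 lg1 lg2 : ℝ)
    (hμg : 0 < μg) (hlf0 : 0 ≤ lf0) (hlf1 : 0 ≤ lf1) (hlg1 : 0 ≤ lg1) (hlg2 : 0 ≤ lg2)
    -- twice continuous differentiability of upper- and lower-level objectives
    (hf2 : ∀ i, ContDiff ℝ 2 (fun p : Vec d1 × Vec d2 => f i p.1 p.2))
    (hg2 : ∀ i, ContDiff ℝ 2 (fun p : Vec d1 × Vec d2 => g i p.1 p.2))
    -- partial gradients of g_i
    (gxg : Fin N → Vec d1 → Vec d2 → Vec d1)
    (gyg : Fin N → Vec d1 → Vec d2 → Vec d2)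
    (hgxg : ∀ i x y, HasGradientAt (fun x' => g i x' y) (gxg i x y) x)
    (hgyg : ∀ i x y, HasGradientAt (fun y' => g i x y') (gyg i x y) y)
    -- partial gradients of f_i
    (gxf : Fin N → Vec d1 → Vec d2 → Vec d1)
    (gyf : Fin N → Vec d1 → Vec d2 → Vec d2)
    (hgxf : ∀ i x y, HasGradientAt (fun x' => f i x' y) (gxf i x y) x)
    (hgyf : ∀ i x y, HasGradientAt (fun y' => f i x y') (gyf i x y) y)
    -- each g_i(x, ·) is μ_g-strongly convex in y (first-order characterization)
    (hsc : ∀ i x y1 y2, g i x y1 ≥ g i x y2 + ⟪gyg i x y2, y1 - y2⟫ + μg / 2 * ‖y1 - y2‖ ^ 2)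
    -- f_i is l_{f,0}-Lipschitz (ℓ2 norm on the joint variable)
    (hLf0 : ∀ i x1 y1 x2 y2, |f i x1 y1 - f i x2 y2|
      ≤ lf0 * Real.sqrt (‖x1 - x2‖ ^ 2 + ‖y1 - y2‖ ^ 2))
    -- ∇f_i is l_{f,1}-Lipschitz
    (hLf1 : ∀ i x1 y1 x2 y2,
      Real.sqrt (‖gxf i x1 y1 - gxf i x2 y2‖ ^ 2 + ‖gyf i x1 y1 - gyf i x2 y2‖ ^ 2)
        ≤ lf1 * Real.sqrt (‖x1 - x2‖ ^ 2 + ‖y1 - y2‖ ^ 2))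
    -- ∇g_i is l_{g,1}-Lipschitz
    (hLg1 : ∀ i x1 y1 x2 y2,
      Real.sqrt (‖gxg i x1 y1 - gxg i x2 y2‖ ^ 2 + ‖gyg i x1 y1 - gyg i x2 y2‖ ^ 2)
        ≤ lg1 * Real.sqrt (‖x1 - x2‖ ^ 2 + ‖y1 - y2‖ ^ 2))
    -- second derivative blocks of g_i and their l_{g,2}-Lipschitz continuity
    (Dxy : Fin N → Vec d1 → Vec d2 → (Vec d1 →L[ℝ] Vec d2))
    (Hyy : Fin N → Vec d1 → Vec d2 → (Vec d2 →L[ℝ] Vec d2))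
    (hDxy : ∀ i x y, HasFDerivAt (fun x' => gyg i x' y) (Dxy i x y) x)
    (hHyy : ∀ i x y, HasFDerivAt (fun y' => gyg i x y') (Hyy i x y) y)
    (hLg2xy : ∀ i x1 y1 x2 y2, ‖Dxy i x1 y1 - Dxy i x2 y2‖
      ≤ lg2 * Real.sqrt (‖x1 - x2‖ ^ 2 + ‖y1 - y2‖ ^ 2))
    (hLg2yy : ∀ i x1 y1 x2 y2, ‖Hyy i x1 y1 - Hyy i x2 y2‖
      ≤ lg2 * Real.sqrt (‖x1 - x2‖ ^ 2 + ‖y1 - y2‖ ^ 2))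
    -- inverse of ∇²_{yy} g_i (well defined since ∇²_{yy} g_i ⪰ μ_g I)
    (Hinv : Fin N → Vec d1 → Vec d2 → (Vec d2 →L[ℝ] Vec d2))
    (hHinv : ∀ i x y, (Hyy i x y).comp (Hinv i x y) = ContinuousLinearMap.id ℝ (Vec d2)
      ∧ (Hinv i x y).comp (Hyy i x y) = ContinuousLinearMap.id ℝ (Vec d2))
    -- the surrogate hypergradient of client i
    (barf : Fin N → Vec d1 → Vec d2 → Vec d1)
    (hbarf : ∀ i x y, barf i x y
      = gxf i x y - (ContinuousLinearMap.adjoint (Dxy i x y)) (Hinv i x y (gyf i x y)))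
    -- the constant M_f
    (Mf : ℝ) (hMf : Mf = lf1 + lg1 * lf1 / μg + lf0 / μg * (lg2 + lg1 * lg2 / μg))
    (Lf : ℝ) (hLf : Lf = lf1 + lg1 * (lf1 + Mf) / μg + lf0 / μg * (lg2 + lg1 * lg2 / μg))
    -- y*(x) minimizes the average lower-level objective
    (ystar : Vec d1 → Vec d2)
    (hystar : ∀ x y, (N : ℝ)⁻¹ * ∑ i, g i x (ystar x) ≤ (N : ℝ)⁻¹ * ∑ i, g i x y)
    -- ∇Φ : the gradient of Φ(x) = f(x, y*(x))
    (gPhi : Vec d1 → Vec d1)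
    (hgPhi : ∀ x, HasGradientAt (fun x' => (N : ℝ)⁻¹ * ∑ i, f i x' (ystar x')) (gPhi x) x) :
    ∀ x1 x2 : Vec d1, ‖gPhi x1 - gPhi x2‖ ≤ Lf * ‖x1 - x2‖ := by
  -- per-client Lipschitz consequences
  have hgxf_lip : ∀ i (x1 : Vec d1) (y1 : Vec d2) x2 y2,
      ‖gxf i x1 y1 - gxf i x2 y2‖ ≤ lf1 * (‖x1 - x2‖ + ‖y1 - y2‖) := by
    intro i x1 y1 x2 y2
    refine le_trans (le_sqrt_left _ ‖gyf i x1 y1 - gyf i x2 y2‖ (norm_nonneg _)) ?_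
    exact le_trans (hLf1 i x1 y1 x2 y2)
      (mul_le_mul_of_nonneg_left (sqrt_le_add _ _ (norm_nonneg _) (norm_nonneg _)) hlf1)
  have hgyf_lip : ∀ i (x1 : Vec d1) (y1 : Vec d2) x2 y2,
      ‖gyf i x1 y1 - gyf i x2 y2‖ ≤ lf1 * (‖x1 - x2‖ + ‖y1 - y2‖) := by
    intro i x1 y1 x2 y2
    refine le_trans (le_sqrt_right ‖gxf i x1 y1 - gxf i x2 y2‖ _ (norm_nonneg _)) ?_
    exact le_trans (hLf1 i x1 y1 x2 y2)
      (mul_le_mul_of_nonneg_left (sqrt_le_add _ _ (norm_nonneg _) (norm_nonneg _)) hlf1)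
  have hgyg_lip : ∀ i (x1 : Vec d1) (y1 : Vec d2) x2 y2,
      ‖gyg i x1 y1 - gyg i x2 y2‖ ≤ lg1 * (‖x1 - x2‖ + ‖y1 - y2‖) := by
    intro i x1 y1 x2 y2
    refine le_trans (le_sqrt_right ‖gxg i x1 y1 - gxg i x2 y2‖ _ (norm_nonneg _)) ?_
    exact le_trans (hLg1 i x1 y1 x2 y2)
      (mul_le_mul_of_nonneg_left (sqrt_le_add _ _ (norm_nonneg _) (norm_nonneg _)) hlg1)
  have hDxy_lip : ∀ i (x1 : Vec d1) (y1 : Vec d2) x2 y2,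
      ‖Dxy i x1 y1 - Dxy i x2 y2‖ ≤ lg2 * (‖x1 - x2‖ + ‖y1 - y2‖) := fun i x1 y1 x2 y2 =>
    le_trans (hLg2xy i x1 y1 x2 y2)
      (mul_le_mul_of_nonneg_left (sqrt_le_add _ _ (norm_nonneg _) (norm_nonneg _)) hlg2)
  have hHyy_lip : ∀ i (x1 : Vec d1) (y1 : Vec d2) x2 y2,
      ‖Hyy i x1 y1 - Hyy i x2 y2‖ ≤ lg2 * (‖x1 - x2‖ + ‖y1 - y2‖) := fun i x1 y1 x2 y2 =>
    le_trans (hLg2yy i x1 y1 x2 y2)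
      (mul_le_mul_of_nonneg_left (sqrt_le_add _ _ (norm_nonneg _) (norm_nonneg _)) hlg2)
  -- bound on gyf
  have hgyf_bd : ∀ i x y, ‖gyf i x y‖ ≤ lf0 := by
    intro i x y
    refine grad_norm_le hlf0 y (hgyf i x y) (fun y' => ?_)
    have h1 := hLf0 i x y' x y
    have h2 : Real.sqrt (‖x - x‖ ^ 2 + ‖y' - y‖ ^ 2) = ‖y' - y‖ := by
      rw [sub_self, norm_zero]
      simp [Real.sqrt_sq (norm_nonneg _)]
    rwa [h2] at h1
  -- bound on Dxy
  have hDxy_bd : ∀ i x y, ‖Dxy i x y‖ ≤ lg1 := by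
    intro i x y
    refine fderiv_norm_le hlg1 x (hDxy i x y) (fun x' => ?_)
    have h1 := hgyg_lip i x' y x y
    simpa using h1
  -- strong monotonicity of gyg i in y
  have hmono : ∀ i x y1 y2, μg * ‖y1 - y2‖ ^ 2 ≤ ⟪gyg i x y1 - gyg i x y2, y1 - y2⟫ := by
    intro i x y1 y2
    have e1 := hsc i x y1 y2
    have e2 := hsc i x y2 y1
    rw [inner_sub_left]
    rw [norm_sub_rev y2 y1] at e2
    have hin : ⟪gyg i x y1, y2 - y1⟫ = -⟪gyg i x y1, y1 - y2⟫ := by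
      rw [← inner_neg_right, neg_sub]
    rw [hin] at e2
    linarith
  -- coercivity of Hyy
  have hcoer : ∀ i x y v, μg * ‖v‖ ^ 2 ≤ ⟪Hyy i x y v, v⟫ := by
    intro i x y v
    exact coercive_of_monotone (gyg i x) (Hyy i x y) y (hHyy i x y)
      (fun y' => hmono i x y' y) v
  set Y := ystar with hYdef
  set κ := lg1 / μg with hκdef
  have hκ0 : 0 ≤ κ := div_nonneg hlg1 hμg.le
  set Gybar : Vec d1 → Vec d2 → Vec d2 := fun x y => (N : ℝ)⁻¹ • ∑ i, gyg i x y with hGybar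
  -- gradient of average g in y
  have hGyGrad : ∀ x y, HasGradientAt (fun y' => (N : ℝ)⁻¹ * ∑ i, g i x y') (Gybar x y) y := by
    intro x y
    rw [hasGradientAt_iff_hasFDerivAt]
    have hsum : HasFDerivAt (fun y' => ∑ i, g i x y')
        (∑ i, (InnerProductSpace.toDual ℝ (Vec d2)) (gyg i x y)) y :=
      HasFDerivAt.fun_sum (fun i _ => hasGradientAt_iff_hasFDerivAt.1 (hgyg i x y))
    have h2 := hsum.const_mul ((N : ℝ)⁻¹)
    refine h2.congr_fderiv ?_
    rw [hGybar]
    simp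
  -- first-order condition at the minimizer
  have hGyzero : ∀ x, Gybar x (Y x) = 0 := by
    intro x
    have hmin : IsLocalMin (fun y' => (N : ℝ)⁻¹ * ∑ i, g i x y') (Y x) :=
      Filter.Eventually.of_forall (fun y' => hystar x y')
    have h1 := hmin.hasFDerivAt_eq_zero (hasGradientAt_iff_hasFDerivAt.1 (hGyGrad x (Y x)))
    have h2 : (InnerProductSpace.toDual ℝ (Vec d2)) (Gybar x (Y x))
        = (InnerProductSpace.toDual ℝ (Vec d2)) 0 := by rw [h1]; simp
    exact (InnerProductSpace.toDual ℝ (Vec d2)).injective h2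
  -- strong monotonicity of the average
  have hGy_mono : ∀ x y1 y2, μg * ‖y1 - y2‖ ^ 2 ≤ ⟪Gybar x y1 - Gybar x y2, y1 - y2⟫ := by
    intro x y1 y2
    have hsplit : Gybar x y1 - Gybar x y2 = (N : ℝ)⁻¹ • ∑ i, (gyg i x y1 - gyg i x y2) := by
      rw [hGybar]
      simp [Finset.sum_sub_distrib, smul_sub]
    rw [hsplit, real_inner_smul_left, sum_inner]
    exact avg_ge hN _ _ (fun i => hmono i x y1 y2)
  -- Lipschitzness of ystar
  have hYlip : ∀ x1 x2, ‖Y x1 - Y x2‖ ≤ κ * ‖x1 - x2‖ := by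
    intro x1 x2
    have h1 := hGy_mono x1 (Y x1) (Y x2)
    have h2 : Gybar x1 (Y x1) - Gybar x1 (Y x2) = Gybar x2 (Y x2) - Gybar x1 (Y x2) := by
      rw [hGyzero x1, hGyzero x2]
    have h3 : ‖Gybar x2 (Y x2) - Gybar x1 (Y x2)‖ ≤ lg1 * ‖x1 - x2‖ := by
      have hsplit : Gybar x2 (Y x2) - Gybar x1 (Y x2)
          = (N : ℝ)⁻¹ • ∑ i, (gyg i x2 (Y x2) - gyg i x1 (Y x2)) := by
        rw [hGybar]; simp [Finset.sum_sub_distrib, smul_sub]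
      rw [hsplit]
      refine avg_norm_le hN _ _ (fun i => ?_)
      have := hgyg_lip i x2 (Y x2) x1 (Y x2)
      rw [norm_sub_rev x2 x1] at this
      simpa using this
    have h4 : ⟪Gybar x2 (Y x2) - Gybar x1 (Y x2), Y x1 - Y x2⟫
        ≤ lg1 * ‖x1 - x2‖ * ‖Y x1 - Y x2‖ :=
      (real_inner_le_norm _ _).trans (mul_le_mul_of_nonneg_right h3 (norm_nonneg _))
    rw [h2] at h1
    have h5 := h1.trans h4
    rcases eq_or_lt_of_le (norm_nonneg (Y x1 - Y x2)) with h6 | h6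
    · rw [← h6]; positivity
    · rw [hκdef, div_mul_eq_mul_div, le_div_iff₀ hμg]
      nlinarith
  set Hb : Vec d1 → (Vec d2 →L[ℝ] Vec d2) := fun x => (N : ℝ)⁻¹ • ∑ i, Hyy i x (Y x) with hHbdef
  have hHbcoer : ∀ x v, μg * ‖v‖ ^ 2 ≤ ⟪Hb x v, v⟫ := by
    intro x v
    have happ : Hb x v = (N : ℝ)⁻¹ • ∑ i, Hyy i x (Y x) v := by
      rw [hHbdef]; simp
    rw [happ, real_inner_smul_left, sum_inner]
    exact avg_ge hN _ _ (fun i => hcoer i x (Y x) v)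
  obtain ⟨S, hS1, hS2, hS3⟩ : ∃ S : Vec d1 → (Vec d2 →L[ℝ] Vec d2),
      (∀ x, (Hb x).comp (S x) = ContinuousLinearMap.id ℝ (Vec d2)) ∧
      (∀ x, (S x).comp (Hb x) = ContinuousLinearMap.id ℝ (Vec d2)) ∧ (∀ x, ‖S x‖ ≤ μg⁻¹) := by
    choose S h1 h2 h3 using fun x => exists_inverse_of_coercive hμg (Hb x) (hHbcoer x)
    exact ⟨S, h1, h2, h3⟩
  set Fxb : Vec d1 → Vec d1 := fun x => (N : ℝ)⁻¹ • ∑ i, gxf i x (Y x) with hFxbdef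
  set Fyb : Vec d1 → Vec d2 := fun x => (N : ℝ)⁻¹ • ∑ i, gyf i x (Y x) with hFybdef
  set Db : Vec d1 → (Vec d1 →L[ℝ] Vec d2) := fun x => (N : ℝ)⁻¹ • ∑ i, Dxy i x (Y x) with hDbdef
  set hvec : Vec d1 → Vec d1 := fun x => Fxb x
    - (ContinuousLinearMap.adjoint (Db x)) ((ContinuousLinearMap.adjoint (S x)) (Fyb x)) with hhvec
  have hFyb_bd : ∀ x, ‖Fyb x‖ ≤ lf0 := fun x => avg_norm_le hN _ _ (fun i => hgyf_bd i x (Y x))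
  have hDb_bd : ∀ x, ‖Db x‖ ≤ lg1 := fun x => avg_norm_le hN _ _ (fun i => hDxy_bd i x (Y x))
  have hpair : ∀ x1 x2 : Vec d1, ‖x1 - x2‖ + ‖Y x1 - Y x2‖ ≤ (1 + κ) * ‖x1 - x2‖ := by
    intro x1 x2
    have h1 := hYlip x1 x2
    have h2 : (1 + κ) * ‖x1 - x2‖ = ‖x1 - x2‖ + κ * ‖x1 - x2‖ := by ring
    rw [h2]
    linarith
  have hFxb_lip : ∀ x1 x2, ‖Fxb x1 - Fxb x2‖ ≤ lf1 * ((1 + κ) * ‖x1 - x2‖) := by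
    intro x1 x2
    have hsplit : Fxb x1 - Fxb x2 = (N : ℝ)⁻¹ • ∑ i, (gxf i x1 (Y x1) - gxf i x2 (Y x2)) := by
      rw [hFxbdef]; simp [Finset.sum_sub_distrib, smul_sub]
    rw [hsplit]
    refine avg_norm_le hN _ _ (fun i => (hgxf_lip i x1 (Y x1) x2 (Y x2)).trans ?_)
    exact mul_le_mul_of_nonneg_left (hpair x1 x2) hlf1
  have hFyb_lip : ∀ x1 x2, ‖Fyb x1 - Fyb x2‖ ≤ lf1 * ((1 + κ) * ‖x1 - x2‖) := by
    intro x1 x2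
    have hsplit : Fyb x1 - Fyb x2 = (N : ℝ)⁻¹ • ∑ i, (gyf i x1 (Y x1) - gyf i x2 (Y x2)) := by
      rw [hFybdef]; simp [Finset.sum_sub_distrib, smul_sub]
    rw [hsplit]
    refine avg_norm_le hN _ _ (fun i => (hgyf_lip i x1 (Y x1) x2 (Y x2)).trans ?_)
    exact mul_le_mul_of_nonneg_left (hpair x1 x2) hlf1
  have hDb_lip : ∀ x1 x2, ‖Db x1 - Db x2‖ ≤ lg2 * ((1 + κ) * ‖x1 - x2‖) := by
    intro x1 x2
    have hsplit : Db x1 - Db x2 = (N : ℝ)⁻¹ • ∑ i, (Dxy i x1 (Y x1) - Dxy i x2 (Y x2)) := by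
      rw [hDbdef]; simp [Finset.sum_sub_distrib, smul_sub]
    rw [hsplit]
    refine avg_norm_le hN _ _ (fun i => (hDxy_lip i x1 (Y x1) x2 (Y x2)).trans ?_)
    exact mul_le_mul_of_nonneg_left (hpair x1 x2) hlg2
  have hHb_lip : ∀ x1 x2, ‖Hb x1 - Hb x2‖ ≤ lg2 * ((1 + κ) * ‖x1 - x2‖) := by
    intro x1 x2
    have hsplit : Hb x1 - Hb x2 = (N : ℝ)⁻¹ • ∑ i, (Hyy i x1 (Y x1) - Hyy i x2 (Y x2)) := by
      rw [hHbdef]; simp [Finset.sum_sub_distrib, smul_sub]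
    rw [hsplit]
    refine avg_norm_le hN _ _ (fun i => (hHyy_lip i x1 (Y x1) x2 (Y x2)).trans ?_)
    exact mul_le_mul_of_nonneg_left (hpair x1 x2) hlg2
  have hS_lip : ∀ x1 x2, ‖S x1 - S x2‖ ≤ μg⁻¹ * (lg2 * ((1 + κ) * ‖x1 - x2‖) * μg⁻¹) := by
    intro x1 x2
    have e1 : (S x1).comp ((Hb x2).comp (S x2)) = S x1 := by
      rw [hS1 x2, ContinuousLinearMap.comp_id]
    have e2 : (S x1).comp ((Hb x1).comp (S x2)) = S x2 := by
      rw [← ContinuousLinearMap.comp_assoc, hS2 x1, ContinuousLinearMap.id_comp]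
    have hid : S x1 - S x2 = (S x1).comp ((Hb x2 - Hb x1).comp (S x2)) := by
      rw [ContinuousLinearMap.sub_comp, ContinuousLinearMap.comp_sub, e1, e2]
    rw [hid]
    calc ‖(S x1).comp ((Hb x2 - Hb x1).comp (S x2))‖
        ≤ ‖S x1‖ * ‖(Hb x2 - Hb x1).comp (S x2)‖ := ContinuousLinearMap.opNorm_comp_le _ _
      _ ≤ ‖S x1‖ * (‖Hb x2 - Hb x1‖ * ‖S x2‖) :=
          mul_le_mul_of_nonneg_left (ContinuousLinearMap.opNorm_comp_le _ _) (norm_nonneg _)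
      _ ≤ μg⁻¹ * (lg2 * ((1 + κ) * ‖x1 - x2‖) * μg⁻¹) := by
          have h1 := hS3 x1
          have h2 := hS3 x2
          have h3 := hHb_lip x2 x1
          rw [norm_sub_rev x2 x1] at h3
          have hnn : (0:ℝ) ≤ lg2 * ((1 + κ) * ‖x1 - x2‖) := by positivity
          have h4 : ‖Hb x2 - Hb x1‖ * ‖S x2‖ ≤ lg2 * ((1 + κ) * ‖x1 - x2‖) * μg⁻¹ :=
            mul_le_mul h3 h2 (norm_nonneg _) hnn
          exact mul_le_mul h1 h4 (mul_nonneg (norm_nonneg _) (norm_nonneg _)) (by positivity)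
  -- per-client Taylor expansions
  have hQgx : ∀ i (x : Vec d1) (y : Vec d2) (x' : Vec d1),
      ‖gyg i x' y - gyg i x y - Dxy i x y (x' - x)‖ ≤ lg2 * ‖x' - x‖ ^ 2 := by
    intro i x y x'
    exact taylor_vec (fun x'' => gyg i x'' y) (fun x'' => Dxy i x'' y) lg2 hlg2
      (fun x'' => hDxy i x'' y) (fun a b => by have h := hDxy_lip i a y b y; rwa [sub_self, norm_zero, add_zero] at h) x x'
  have hQgy : ∀ i (x : Vec d1) (y y' : Vec d2),
      ‖gyg i x y' - gyg i x y - Hyy i x y (y' - y)‖ ≤ lg2 * ‖y' - y‖ ^ 2 := by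
    intro i x y y'
    exact taylor_vec (fun y'' => gyg i x y'') (fun y'' => Hyy i x y'') lg2 hlg2
      (fun y'' => hHyy i x y'') (fun a b => by have h := hHyy_lip i x a x b; rwa [sub_self, norm_zero, zero_add] at h) y y'
  have hQfx : ∀ i (x : Vec d1) (y : Vec d2) (x' : Vec d1),
      |f i x' y - f i x y - ⟪gxf i x y, x' - x⟫| ≤ lf1 * ‖x' - x‖ ^ 2 := by
    intro i x y x'
    exact taylor_scalar (fun x'' => f i x'' y) (fun x'' => gxf i x'' y) lf1 hlf1
      (fun x'' => hgxf i x'' y) (fun a b => by have h := hgxf_lip i a y b y; rwa [sub_self, norm_zero, add_zero] at h) x x'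
  have hQfy : ∀ i (x : Vec d1) (y y' : Vec d2),
      |f i x y' - f i x y - ⟪gyf i x y, y' - y⟫| ≤ lf1 * ‖y' - y‖ ^ 2 := by
    intro i x y y'
    exact taylor_scalar (fun y'' => f i x y'') (fun y'' => gyf i x y'') lf1 hlf1
      (fun y'' => hgyf i x y'') (fun a b => by have h := hgyf_lip i x a x b; rwa [sub_self, norm_zero, zero_add] at h) y y'
  -- combined per-client second-order estimates
  have hR1 : ∀ i (x x' : Vec d1),
      ‖gyg i x' (Y x') - gyg i x (Y x) - Dxy i x (Y x) (x' - x) - Hyy i x (Y x) (Y x' - Y x)‖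
        ≤ lg2 * (‖x' - x‖ ^ 2 + ‖x' - x‖ * ‖Y x' - Y x‖ + ‖Y x' - Y x‖ ^ 2) := by
    intro i x x'
    have t1 := hQgy i x' (Y x) (Y x')
    have t2 := hQgx i x (Y x) x'
    have t3 : ‖(Hyy i x' (Y x) - Hyy i x (Y x)) (Y x' - Y x)‖
        ≤ lg2 * (‖x' - x‖ * ‖Y x' - Y x‖) := by
      have h5 := hHyy_lip i x' (Y x) x (Y x)
      rw [sub_self, norm_zero, add_zero] at h5
      calc ‖(Hyy i x' (Y x) - Hyy i x (Y x)) (Y x' - Y x)‖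
          ≤ ‖Hyy i x' (Y x) - Hyy i x (Y x)‖ * ‖Y x' - Y x‖ :=
            ContinuousLinearMap.le_opNorm _ _
        _ ≤ lg2 * ‖x' - x‖ * ‖Y x' - Y x‖ := mul_le_mul_of_nonneg_right h5 (norm_nonneg _)
        _ = lg2 * (‖x' - x‖ * ‖Y x' - Y x‖) := by ring
    have hsum : gyg i x' (Y x') - gyg i x (Y x) - Dxy i x (Y x) (x' - x)
          - Hyy i x (Y x) (Y x' - Y x)
        = (gyg i x' (Y x') - gyg i x' (Y x) - Hyy i x' (Y x) (Y x' - Y x))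
          + (gyg i x' (Y x) - gyg i x (Y x) - Dxy i x (Y x) (x' - x))
          + ((Hyy i x' (Y x) - Hyy i x (Y x)) (Y x' - Y x)) := by
      rw [ContinuousLinearMap.sub_apply]
      abel
    rw [hsum]
    refine (norm_add₃_le).trans ?_
    have hrhs : lg2 * (‖x' - x‖ ^ 2 + ‖x' - x‖ * ‖Y x' - Y x‖ + ‖Y x' - Y x‖ ^ 2)
        = lg2 * ‖Y x' - Y x‖ ^ 2 + lg2 * ‖x' - x‖ ^ 2 + lg2 * (‖x' - x‖ * ‖Y x' - Y x‖) := by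
      ring
    rw [hrhs]
    exact add_le_add (add_le_add t1 t2) t3
  have hR2 : ∀ i (x x' : Vec d1),
      |f i x' (Y x') - f i x (Y x) - ⟪gxf i x (Y x), x' - x⟫ - ⟪gyf i x (Y x), Y x' - Y x⟫|
        ≤ lf1 * (‖x' - x‖ ^ 2 + ‖x' - x‖ * ‖Y x' - Y x‖ + ‖Y x' - Y x‖ ^ 2) := by
    intro i x x'
    have t1 := hQfy i x' (Y x) (Y x')
    have t2 := hQfx i x (Y x) x'
    have t3 : |⟪gyf i x' (Y x) - gyf i x (Y x), Y x' - Y x⟫|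
        ≤ lf1 * (‖x' - x‖ * ‖Y x' - Y x‖) := by
      have h5 := hgyf_lip i x' (Y x) x (Y x)
      rw [sub_self, norm_zero, add_zero] at h5
      calc |⟪gyf i x' (Y x) - gyf i x (Y x), Y x' - Y x⟫|
          ≤ ‖gyf i x' (Y x) - gyf i x (Y x)‖ * ‖Y x' - Y x‖ := abs_real_inner_le_norm _ _
        _ ≤ lf1 * ‖x' - x‖ * ‖Y x' - Y x‖ := mul_le_mul_of_nonneg_right h5 (norm_nonneg _)
        _ = lf1 * (‖x' - x‖ * ‖Y x' - Y x‖) := by ring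
    have hsum : f i x' (Y x') - f i x (Y x) - ⟪gxf i x (Y x), x' - x⟫
          - ⟪gyf i x (Y x), Y x' - Y x⟫
        = (f i x' (Y x') - f i x' (Y x) - ⟪gyf i x' (Y x), Y x' - Y x⟫)
          + (f i x' (Y x) - f i x (Y x) - ⟪gxf i x (Y x), x' - x⟫)
          + ⟪gyf i x' (Y x) - gyf i x (Y x), Y x' - Y x⟫ := by
      rw [inner_sub_left]
      ring
    rw [hsum]
    refine (abs_add_le _ _).trans ?_
    refine le_trans (add_le_add (abs_add_le _ _) (le_refl _)) ?_
    have hrhs : lf1 * (‖x' - x‖ ^ 2 + ‖x' - x‖ * ‖Y x' - Y x‖ + ‖Y x' - Y x‖ ^ 2)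
        = (lf1 * ‖Y x' - Y x‖ ^ 2 + lf1 * ‖x' - x‖ ^ 2) + lf1 * (‖x' - x‖ * ‖Y x' - Y x‖) := by
      ring
    rw [hrhs]
    exact add_le_add (add_le_add t1 t2) t3
  -- averaged second-order estimates
  have hR1avg : ∀ x x' : Vec d1,
      ‖Gybar x' (Y x') - Gybar x (Y x) - Db x (x' - x) - Hb x (Y x' - Y x)‖
        ≤ lg2 * (‖x' - x‖ ^ 2 + ‖x' - x‖ * ‖Y x' - Y x‖ + ‖Y x' - Y x‖ ^ 2) := by
    intro x x'
    have happ : Gybar x' (Y x') - Gybar x (Y x) - Db x (x' - x) - Hb x (Y x' - Y x)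
        = (N : ℝ)⁻¹ • ∑ i, (gyg i x' (Y x') - gyg i x (Y x) - Dxy i x (Y x) (x' - x)
            - Hyy i x (Y x) (Y x' - Y x)) := by
      rw [hGybar, hDbdef, hHbdef]
      simp only [ContinuousLinearMap.coe_sum', ContinuousLinearMap.coe_smul',
        Finset.sum_apply, Pi.smul_apply, ContinuousLinearMap.sum_apply,
        ContinuousLinearMap.smul_apply]
      rw [← smul_sub, ← smul_sub, ← smul_sub, ← Finset.sum_sub_distrib,
        ← Finset.sum_sub_distrib, ← Finset.sum_sub_distrib]
    rw [happ]
    exact avg_norm_le hN _ _ (fun i => hR1 i x x')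
  have hR2avg : ∀ x x' : Vec d1,
      |(N : ℝ)⁻¹ * ∑ i, f i x' (Y x') - (N : ℝ)⁻¹ * ∑ i, f i x (Y x)
        - ⟪Fxb x, x' - x⟫ - ⟪Fyb x, Y x' - Y x⟫|
        ≤ lf1 * (‖x' - x‖ ^ 2 + ‖x' - x‖ * ‖Y x' - Y x‖ + ‖Y x' - Y x‖ ^ 2) := by
    intro x x'
    have happ : (N : ℝ)⁻¹ * ∑ i, f i x' (Y x') - (N : ℝ)⁻¹ * ∑ i, f i x (Y x)
        - ⟪Fxb x, x' - x⟫ - ⟪Fyb x, Y x' - Y x⟫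
        = (N : ℝ)⁻¹ • ∑ i, (f i x' (Y x') - f i x (Y x) - ⟪gxf i x (Y x), x' - x⟫
            - ⟪gyf i x (Y x), Y x' - Y x⟫) := by
      rw [hFxbdef, hFybdef]
      simp only [real_inner_smul_left, sum_inner, smul_eq_mul]
      rw [Finset.sum_sub_distrib, Finset.sum_sub_distrib, Finset.sum_sub_distrib]
      ring
    rw [happ, ← Real.norm_eq_abs]
    exact avg_norm_le hN _ _ (fun i => by
      rw [Real.norm_eq_abs]; exact hR2 i x x')
  have hfold : ∀ x x' : Vec d1, ‖x' - x‖ ^ 2 + ‖x' - x‖ * ‖Y x' - Y x‖ + ‖Y x' - Y x‖ ^ 2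
      ≤ (1 + κ + κ ^ 2) * ‖x' - x‖ ^ 2 := by
    intro x x'
    have h1 := hYlip x' x
    nlinarith [norm_nonneg (x' - x), norm_nonneg (Y x' - Y x), hκ0, mul_le_mul_of_nonneg_left h1 (norm_nonneg (x' - x)), mul_self_le_mul_self (norm_nonneg (Y x' - Y x)) h1]
  -- the implicit-function estimate
  have hkey2 : ∀ x x' : Vec d1, ‖(Y x' - Y x) + S x (Db x (x' - x))‖
      ≤ μg⁻¹ * (lg2 * ((1 + κ + κ ^ 2) * ‖x' - x‖ ^ 2)) := by
    intro x x'
    have hSH : S x (Hb x (Y x' - Y x)) = Y x' - Y x := by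
      have h0 := ContinuousLinearMap.ext_iff.1 (hS2 x) (Y x' - Y x)
      simpa using h0
    have heq : (Y x' - Y x) + S x (Db x (x' - x))
        = S x (Hb x (Y x' - Y x) + Db x (x' - x)) := by
      rw [map_add, hSH]
    rw [heq]
    have h2 : Hb x (Y x' - Y x) + Db x (x' - x)
        = -(Gybar x' (Y x') - Gybar x (Y x) - Db x (x' - x) - Hb x (Y x' - Y x)) := by
      rw [hGyzero x, hGyzero x']
      abel
    calc ‖S x (Hb x (Y x' - Y x) + Db x (x' - x))‖
        ≤ ‖S x‖ * ‖Hb x (Y x' - Y x) + Db x (x' - x)‖ := ContinuousLinearMap.le_opNorm _ _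
      _ ≤ μg⁻¹ * (lg2 * ((1 + κ + κ ^ 2) * ‖x' - x‖ ^ 2)) := by
          rw [h2, norm_neg]
          refine mul_le_mul (hS3 x) ?_ (norm_nonneg _) (by positivity)
          refine (hR1avg x x').trans ?_
          exact mul_le_mul_of_nonneg_left (hfold x x') hlg2
  -- quadratic expansion of Φ around each point with candidate gradient hvec
  have hC : ∀ x x' : Vec d1,
      |(N : ℝ)⁻¹ * ∑ i, f i x' (Y x') - (N : ℝ)⁻¹ * ∑ i, f i x (Y x) - ⟪hvec x, x' - x⟫|
        ≤ (lf1 * (1 + κ + κ ^ 2) + lf0 * (μg⁻¹ * (lg2 * (1 + κ + κ ^ 2)))) * ‖x' - x‖ ^ 2 := by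
    intro x x'
    have hinner : ⟪hvec x, x' - x⟫ = ⟪Fxb x, x' - x⟫ - ⟪Fyb x, S x (Db x (x' - x))⟫ := by
      rw [hhvec]
      beta_reduce
      rw [inner_sub_left, ContinuousLinearMap.adjoint_inner_left,
        ContinuousLinearMap.adjoint_inner_left]
    have hE1 : |(N : ℝ)⁻¹ * ∑ i, f i x' (Y x') - (N : ℝ)⁻¹ * ∑ i, f i x (Y x)
        - ⟪Fxb x, x' - x⟫ - ⟪Fyb x, Y x' - Y x⟫| ≤ lf1 * ((1 + κ + κ ^ 2) * ‖x' - x‖ ^ 2) := by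
      refine (hR2avg x x').trans ?_
      exact mul_le_mul_of_nonneg_left (hfold x x') hlf1
    have hE2 : |⟪Fyb x, (Y x' - Y x) + S x (Db x (x' - x))⟫|
        ≤ lf0 * (μg⁻¹ * (lg2 * ((1 + κ + κ ^ 2) * ‖x' - x‖ ^ 2))) := by
      refine (abs_real_inner_le_norm _ _).trans ?_
      exact mul_le_mul (hFyb_bd x) (hkey2 x x') (norm_nonneg _) hlf0
    have hsplit2 : (N : ℝ)⁻¹ * ∑ i, f i x' (Y x') - (N : ℝ)⁻¹ * ∑ i, f i x (Y x)
          - ⟪hvec x, x' - x⟫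
        = ((N : ℝ)⁻¹ * ∑ i, f i x' (Y x') - (N : ℝ)⁻¹ * ∑ i, f i x (Y x)
          - ⟪Fxb x, x' - x⟫ - ⟪Fyb x, Y x' - Y x⟫)
          + ⟪Fyb x, (Y x' - Y x) + S x (Db x (x' - x))⟫ := by
      rw [hinner, inner_add_right]
      ring
    rw [hsplit2]
    refine (abs_add_le _ _).trans ?_
    refine le_trans (add_le_add hE1 hE2) (le_of_eq ?_)
    ring
  have hgradh : ∀ x, HasGradientAt (fun x' => (N : ℝ)⁻¹ * ∑ i, f i x' (Y x')) (hvec x) x :=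
    fun x => hasGradientAt_of_quadratic _ x (hvec x) _ (fun x' => hC x x')
  have huniq : ∀ x, gPhi x = hvec x := fun x =>
    (InnerProductSpace.toDual ℝ (Vec d1)).injective
      ((hasGradientAt_iff_hasFDerivAt.1 (hgPhi x)).unique
        (hasGradientAt_iff_hasFDerivAt.1 (hgradh x)))
  -- final Lipschitz bound
  intro x1 x2
  rw [huniq x1, huniq x2]
  have hsplit : hvec x1 - hvec x2
      = (Fxb x1 - Fxb x2)
      - ((ContinuousLinearMap.adjoint (Db x1) - ContinuousLinearMap.adjoint (Db x2))
            ((ContinuousLinearMap.adjoint (S x1)) (Fyb x1))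
        + (ContinuousLinearMap.adjoint (Db x2))
            ((ContinuousLinearMap.adjoint (S x1) - ContinuousLinearMap.adjoint (S x2)) (Fyb x1))
        + (ContinuousLinearMap.adjoint (Db x2))
            ((ContinuousLinearMap.adjoint (S x2)) (Fyb x1 - Fyb x2))) := by
    rw [hhvec]
    beta_reduce
    simp only [ContinuousLinearMap.sub_apply, map_sub]
    abel
  have hADb_lip : ‖ContinuousLinearMap.adjoint (Db x1) - ContinuousLinearMap.adjoint (Db x2)‖
      ≤ lg2 * ((1 + κ) * ‖x1 - x2‖) := by
    rw [← map_sub, norm_adjoint_eq]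
    exact hDb_lip x1 x2
  have hAS_lip : ‖ContinuousLinearMap.adjoint (S x1) - ContinuousLinearMap.adjoint (S x2)‖
      ≤ μg⁻¹ * (lg2 * ((1 + κ) * ‖x1 - x2‖) * μg⁻¹) := by
    rw [← map_sub, norm_adjoint_eq]
    exact hS_lip x1 x2
  have hu1 : ‖(ContinuousLinearMap.adjoint (S x1)) (Fyb x1)‖ ≤ μg⁻¹ * lf0 := by
    refine (ContinuousLinearMap.le_opNorm _ _).trans ?_
    refine mul_le_mul ?_ (hFyb_bd x1) (norm_nonneg _) (by positivity)
    rw [norm_adjoint_eq]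
    exact hS3 x1
  have hb1 := hFxb_lip x1 x2
  have hb2 : ‖(ContinuousLinearMap.adjoint (Db x1) - ContinuousLinearMap.adjoint (Db x2))
        ((ContinuousLinearMap.adjoint (S x1)) (Fyb x1))‖
      ≤ lg2 * ((1 + κ) * ‖x1 - x2‖) * (μg⁻¹ * lf0) := by
    refine (ContinuousLinearMap.le_opNorm _ _).trans ?_
    exact mul_le_mul hADb_lip hu1 (norm_nonneg _) (by positivity)
  have hb3 : ‖(ContinuousLinearMap.adjoint (Db x2))
        ((ContinuousLinearMap.adjoint (S x1) - ContinuousLinearMap.adjoint (S x2)) (Fyb x1))‖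
      ≤ lg1 * (μg⁻¹ * (lg2 * ((1 + κ) * ‖x1 - x2‖) * μg⁻¹) * lf0) := by
    refine (ContinuousLinearMap.le_opNorm _ _).trans ?_
    refine mul_le_mul ?_ ?_ (norm_nonneg _) hlg1
    · rw [norm_adjoint_eq]
      exact hDb_bd x2
    · refine (ContinuousLinearMap.le_opNorm _ _).trans ?_
      exact mul_le_mul hAS_lip (hFyb_bd x1) (norm_nonneg _) (by positivity)
  have hb4 : ‖(ContinuousLinearMap.adjoint (Db x2))
        ((ContinuousLinearMap.adjoint (S x2)) (Fyb x1 - Fyb x2))‖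
      ≤ lg1 * (μg⁻¹ * (lf1 * ((1 + κ) * ‖x1 - x2‖))) := by
    refine (ContinuousLinearMap.le_opNorm _ _).trans ?_
    refine mul_le_mul ?_ ?_ (norm_nonneg _) hlg1
    · rw [norm_adjoint_eq]
      exact hDb_bd x2
    · refine (ContinuousLinearMap.le_opNorm _ _).trans ?_
      refine mul_le_mul ?_ (hFyb_lip x1 x2) (norm_nonneg _) (by positivity)
      rw [norm_adjoint_eq]
      exact hS3 x2
  have htri : ‖hvec x1 - hvec x2‖
      ≤ ‖Fxb x1 - Fxb x2‖
      + (‖(ContinuousLinearMap.adjoint (Db x1) - ContinuousLinearMap.adjoint (Db x2))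
            ((ContinuousLinearMap.adjoint (S x1)) (Fyb x1))‖
        + ‖(ContinuousLinearMap.adjoint (Db x2))
            ((ContinuousLinearMap.adjoint (S x1) - ContinuousLinearMap.adjoint (S x2)) (Fyb x1))‖
        + ‖(ContinuousLinearMap.adjoint (Db x2))
            ((ContinuousLinearMap.adjoint (S x2)) (Fyb x1 - Fyb x2))‖) := by
    rw [hsplit]
    exact (norm_sub_le _ _).trans (add_le_add_right norm_add₃_le _)
  have hconst : lf1 * ((1 + κ) * ‖x1 - x2‖)
      + (lg2 * ((1 + κ) * ‖x1 - x2‖) * (μg⁻¹ * lf0)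
        + lg1 * (μg⁻¹ * (lg2 * ((1 + κ) * ‖x1 - x2‖) * μg⁻¹) * lf0)
        + lg1 * (μg⁻¹ * (lf1 * ((1 + κ) * ‖x1 - x2‖))))
      = Lf * ‖x1 - x2‖ := by
    rw [hLf, hMf, hκdef]
    have hμ : μg ≠ 0 := ne_of_gt hμg
    field_simp
    ring
  calc ‖hvec x1 - hvec x2‖
      ≤ lf1 * ((1 + κ) * ‖x1 - x2‖)
      + (lg2 * ((1 + κ) * ‖x1 - x2‖) * (μg⁻¹ * lf0)
        + lg1 * (μg⁻¹ * (lg2 * ((1 + κ) * ‖x1 - x2‖) * μg⁻¹) * lf0)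
        + lg1 * (μg⁻¹ * (lf1 * ((1 + κ) * ‖x1 - x2‖)))) :=
      htri.trans (add_le_add hb1 (add_le_add (add_le_add hb2 hb3) hb4))
    _ = Lf * ‖x1 - x2‖ := hconst



end
end

section
/- For every client i, every x ∈ ℝ^{d1} and every y ∈ ℝ^{d2}, the surrogate hypergradient is M_f-Lipschitz in its second argument at the lower-level solution: ‖∇̄f_i(x, y) − ∇̄f_i(x, y*(x))‖ ≤ M_f ‖y − y*(x)‖. -/
open scoped RealInnerProductSpace

noncomputable section

lemma norm_fst_le_sqrt_add {E F : Type*} [NormedAddCommGroup E] [NormedAddCommGroup F]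
    (u : E) (w : F) : ‖u‖ ≤ Real.sqrt (‖u‖ ^ 2 + ‖w‖ ^ 2) := by
  have h := Real.sqrt_le_sqrt (le_add_of_nonneg_right (sq_nonneg ‖w‖) : ‖u‖ ^ 2 ≤ ‖u‖ ^ 2 + ‖w‖ ^ 2)
  rwa [Real.sqrt_sq (norm_nonneg u)] at h

lemma norm_snd_le_sqrt_add {E F : Type*} [NormedAddCommGroup E] [NormedAddCommGroup F]
    (u : E) (w : F) : ‖w‖ ≤ Real.sqrt (‖u‖ ^ 2 + ‖w‖ ^ 2) := by
  rw [add_comm]; exact norm_fst_le_sqrt_add w u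

/-- Coercivity of the Hessian from first-order monotonicity. -/
lemma hessian_coercive {d2 : ℕ} (μg : ℝ)
    (G : Vec d2 → Vec d2) (y : Vec d2) (H : Vec d2 →L[ℝ] Vec d2)
    (hH : HasFDerivAt G H y)
    (hmono : ∀ y1 y2, μg * ‖y1 - y2‖ ^ 2 ≤ ⟪G y1 - G y2, y1 - y2⟫)
    (v : Vec d2) : μg * ‖v‖ ^ 2 ≤ ⟪H v, v⟫ := by
  set φ : ℝ → ℝ := fun t => ⟪G (y + t • v), v⟫ with hφdef
  have hcurve : HasDerivAt (fun t : ℝ => y + t • v) v 0 := by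
    simpa using ((hasDerivAt_id (0:ℝ)).smul_const v).const_add y
  have hGc : HasDerivAt (fun t : ℝ => G (y + t • v)) (H v) 0 := by
    have hH' : HasFDerivAt G H (y + (0:ℝ) • v) := by simpa using hH
    exact hH'.comp_hasDerivAt (0:ℝ) hcurve
  have hφ : HasDerivAt φ ⟪H v, v⟫ 0 := by
    have := HasDerivAt.inner ℝ hGc (hasDerivAt_const (0:ℝ) v)
    simpa [hφdef] using this
  rw [hasDerivAt_iff_tendsto_slope] at hφ
  have hev : ∀ᶠ t in nhdsWithin (0:ℝ) {(0:ℝ)}ᶜ, μg * ‖v‖ ^ 2 ≤ slope φ 0 t := by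
    filter_upwards [self_mem_nhdsWithin] with t ht
    have htne : t ≠ 0 := ht
    have ht2 : (0:ℝ) < t ^ 2 := by positivity
    have hm := hmono (y + t • v) y
    have hsub : (y + t • v) - y = t • v := by abel
    rw [hsub] at hm
    have hnorm : ‖t • v‖ ^ 2 = t ^ 2 * ‖v‖ ^ 2 := by
      rw [norm_smul]; simp [mul_pow]
    have hinner : ⟪G (y + t • v) - G y, t • v⟫ = t * (φ t - φ 0) := by
      rw [inner_smul_right, inner_sub_left]
      simp [hφdef, mul_sub]
    rw [hnorm, hinner] at hm
    have key : μg * ‖v‖ ^ 2 ≤ (t * (φ t - φ 0)) / t ^ 2 := by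
      rw [le_div_iff₀ ht2]; nlinarith
    have heq : (t * (φ t - φ 0)) / t ^ 2 = (φ t - φ 0) / t := by
      field_simp
    rw [slope_def_field]
    rw [heq] at key
    simpa using key
  exact ge_of_tendsto hφ hev

/- STATEMENT 2: the surrogate hypergradient is M_f-Lipschitz in its second
   argument at the lower-level solution:
   ‖∇̄f_i(x,y) − ∇̄f_i(x,y*(x))‖ ≤ M_f ‖y − y*(x)‖. -/
set_option maxHeartbeats 1600000 in
theorem surrogate_hypergradient_lipschitz_in_y
    {d1 d2 N : ℕ} (hN : 0 < N)
    (f g : Fin N → Vec d1 → Vec d2 → ℝ)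
    (μg lf0 lf1 lg1 lg2 : ℝ)
    (hμg : 0 < μg) (hlf0 : 0 ≤ lf0) (hlf1 : 0 ≤ lf1) (hlg1 : 0 ≤ lg1) (hlg2 : 0 ≤ lg2)
    -- twice continuous differentiability of upper- and lower-level objectives
    (hf2 : ∀ i, ContDiff ℝ 2 (fun p : Vec d1 × Vec d2 => f i p.1 p.2))
    (hg2 : ∀ i, ContDiff ℝ 2 (fun p : Vec d1 × Vec d2 => g i p.1 p.2))
    -- partial gradients of g_i
    (gxg : Fin N → Vec d1 → Vec d2 → Vec d1)
    (gyg : Fin N → Vec d1 → Vec d2 → Vec d2)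
    (hgxg : ∀ i x y, HasGradientAt (fun x' => g i x' y) (gxg i x y) x)
    (hgyg : ∀ i x y, HasGradientAt (fun y' => g i x y') (gyg i x y) y)
    -- partial gradients of f_i
    (gxf : Fin N → Vec d1 → Vec d2 → Vec d1)
    (gyf : Fin N → Vec d1 → Vec d2 → Vec d2)
    (hgxf : ∀ i x y, HasGradientAt (fun x' => f i x' y) (gxf i x y) x)
    (hgyf : ∀ i x y, HasGradientAt (fun y' => f i x y') (gyf i x y) y)
    -- each g_i(x, ·) is μ_g-strongly convex in y (first-order characterization)
    (hsc : ∀ i x y1 y2, g i x y1 ≥ g i x y2 + ⟪gyg i x y2, y1 - y2⟫ + μg / 2 * ‖y1 - y2‖ ^ 2)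
    -- f_i is l_{f,0}-Lipschitz (ℓ2 norm on the joint variable)
    (hLf0 : ∀ i x1 y1 x2 y2, |f i x1 y1 - f i x2 y2|
      ≤ lf0 * Real.sqrt (‖x1 - x2‖ ^ 2 + ‖y1 - y2‖ ^ 2))
    -- ∇f_i is l_{f,1}-Lipschitz
    (hLf1 : ∀ i x1 y1 x2 y2,
      Real.sqrt (‖gxf i x1 y1 - gxf i x2 y2‖ ^ 2 + ‖gyf i x1 y1 - gyf i x2 y2‖ ^ 2)
        ≤ lf1 * Real.sqrt (‖x1 - x2‖ ^ 2 + ‖y1 - y2‖ ^ 2))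
    -- ∇g_i is l_{g,1}-Lipschitz
    (hLg1 : ∀ i x1 y1 x2 y2,
      Real.sqrt (‖gxg i x1 y1 - gxg i x2 y2‖ ^ 2 + ‖gyg i x1 y1 - gyg i x2 y2‖ ^ 2)
        ≤ lg1 * Real.sqrt (‖x1 - x2‖ ^ 2 + ‖y1 - y2‖ ^ 2))
    -- second derivative blocks of g_i and their l_{g,2}-Lipschitz continuity
    (Dxy : Fin N → Vec d1 → Vec d2 → (Vec d1 →L[ℝ] Vec d2))
    (Hyy : Fin N → Vec d1 → Vec d2 → (Vec d2 →L[ℝ] Vec d2))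
    (hDxy : ∀ i x y, HasFDerivAt (fun x' => gyg i x' y) (Dxy i x y) x)
    (hHyy : ∀ i x y, HasFDerivAt (fun y' => gyg i x y') (Hyy i x y) y)
    (hLg2xy : ∀ i x1 y1 x2 y2, ‖Dxy i x1 y1 - Dxy i x2 y2‖
      ≤ lg2 * Real.sqrt (‖x1 - x2‖ ^ 2 + ‖y1 - y2‖ ^ 2))
    (hLg2yy : ∀ i x1 y1 x2 y2, ‖Hyy i x1 y1 - Hyy i x2 y2‖
      ≤ lg2 * Real.sqrt (‖x1 - x2‖ ^ 2 + ‖y1 - y2‖ ^ 2))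
    -- inverse of ∇²_{yy} g_i (well defined since ∇²_{yy} g_i ⪰ μ_g I)
    (Hinv : Fin N → Vec d1 → Vec d2 → (Vec d2 →L[ℝ] Vec d2))
    (hHinv : ∀ i x y, (Hyy i x y).comp (Hinv i x y) = ContinuousLinearMap.id ℝ (Vec d2)
      ∧ (Hinv i x y).comp (Hyy i x y) = ContinuousLinearMap.id ℝ (Vec d2))
    -- the surrogate hypergradient of client i
    (barf : Fin N → Vec d1 → Vec d2 → Vec d1)
    (hbarf : ∀ i x y, barf i x y
      = gxf i x y - (ContinuousLinearMap.adjoint (Dxy i x y)) (Hinv i x y (gyf i x y)))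
    -- the constant M_f
    (Mf : ℝ) (hMf : Mf = lf1 + lg1 * lf1 / μg + lf0 / μg * (lg2 + lg1 * lg2 / μg))
    -- y*(x) minimizes the average lower-level objective
    (ystar : Vec d1 → Vec d2)
    (hystar : ∀ x y, (N : ℝ)⁻¹ * ∑ i, g i x (ystar x) ≤ (N : ℝ)⁻¹ * ∑ i, g i x y) :
    ∀ (i : Fin N) (x : Vec d1) (y : Vec d2),
      ‖barf i x y - barf i x (ystar x)‖ ≤ Mf * ‖y - ystar x‖ := by
  intro i x y
  set z := ystar x with hz
  set Δ : ℝ := ‖y - z‖ with hΔ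
  have hΔ0 : 0 ≤ Δ := norm_nonneg _
  have hμ0 : 0 ≤ μg⁻¹ := le_of_lt (inv_pos.mpr hμg)
  -- a useful simplification of the joint norm when x-parts cancel
  have hzero : ∀ (y1 y2 : Vec d2),
      lf1 * Real.sqrt (‖x - x‖ ^ 2 + ‖y1 - y2‖ ^ 2) = lf1 * ‖y1 - y2‖ := by
    intro y1 y2
    rw [sub_self, norm_zero]
    norm_num [Real.sqrt_sq (norm_nonneg (y1 - y2))]
  -- Step 1: lf1-Lipschitzness of the partial gradients of f in y
  have hgxfL : ∀ y1 y2 : Vec d2, ‖gxf i x y1 - gxf i x y2‖ ≤ lf1 * ‖y1 - y2‖ := by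
    intro y1 y2
    have h := hLf1 i x y1 x y2
    rw [hzero y1 y2] at h
    exact le_trans (norm_fst_le_sqrt_add _ _) h
  have hgyfL : ∀ y1 y2 : Vec d2, ‖gyf i x y1 - gyf i x y2‖ ≤ lf1 * ‖y1 - y2‖ := by
    intro y1 y2
    have h := hLf1 i x y1 x y2
    rw [hzero y1 y2] at h
    exact le_trans (norm_snd_le_sqrt_add _ _) h
  -- Step 2: ‖gyf i x y‖ ≤ lf0 (f is lf0-Lipschitz in y)
  have hgyfB : ∀ y0 : Vec d2, ‖gyf i x y0‖ ≤ lf0 := by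
    intro y0
    have hlip : LipschitzWith lf0.toNNReal (fun y' => f i x y') := by
      apply LipschitzWith.of_dist_le_mul
      intro y1 y2
      have h := hLf0 i x y1 x y2
      rw [sub_self, norm_zero] at h
      have h2 : Real.sqrt ((0:ℝ) ^ 2 + ‖y1 - y2‖ ^ 2) = ‖y1 - y2‖ := by
        norm_num [Real.sqrt_sq (norm_nonneg (y1 - y2))]
      rw [h2] at h
      calc dist (f i x y1) (f i x y2) = |f i x y1 - f i x y2| := Real.dist_eq _ _
        _ ≤ lf0 * ‖y1 - y2‖ := h
        _ = (lf0.toNNReal : ℝ) * dist y1 y2 := by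
            rw [Real.coe_toNNReal _ hlf0, dist_eq_norm]
    have h := ((hgyf i x y0).hasFDerivAt).le_of_lipschitz hlip
    rwa [LinearIsometryEquiv.norm_map, Real.coe_toNNReal _ hlf0] at h
  -- Step 3: ‖Dxy i x y‖ ≤ lg1
  have hDxyB : ∀ y0 : Vec d2, ‖Dxy i x y0‖ ≤ lg1 := by
    intro y0
    have hlip : LipschitzWith lg1.toNNReal (fun x' => gyg i x' y0) := by
      apply LipschitzWith.of_dist_le_mul
      intro x1 x2
      have h := hLg1 i x1 y0 x2 y0
      rw [sub_self, norm_zero] at h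
      have h2 : lg1 * Real.sqrt (‖x1 - x2‖ ^ 2 + (0:ℝ) ^ 2) = lg1 * ‖x1 - x2‖ := by
        norm_num [Real.sqrt_sq (norm_nonneg (x1 - x2))]
      rw [h2] at h
      calc dist (gyg i x1 y0) (gyg i x2 y0) = ‖gyg i x1 y0 - gyg i x2 y0‖ := dist_eq_norm _ _
        _ ≤ Real.sqrt (‖gxg i x1 y0 - gxg i x2 y0‖ ^ 2 + ‖gyg i x1 y0 - gyg i x2 y0‖ ^ 2) :=
            norm_snd_le_sqrt_add _ _
        _ ≤ lg1 * ‖x1 - x2‖ := h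
        _ = (lg1.toNNReal : ℝ) * dist x1 x2 := by
            rw [Real.coe_toNNReal _ hlg1, dist_eq_norm]
    have h := (hDxy i x y0).le_of_lipschitz hlip
    rwa [Real.coe_toNNReal _ hlg1] at h
  -- Step 4: lg2-Lipschitzness of Dxy and Hyy in y
  have hzero2 : ∀ (y1 y2 : Vec d2),
      lg2 * Real.sqrt (‖x - x‖ ^ 2 + ‖y1 - y2‖ ^ 2) = lg2 * ‖y1 - y2‖ := by
    intro y1 y2
    rw [sub_self, norm_zero]
    norm_num [Real.sqrt_sq (norm_nonneg (y1 - y2))]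
  have hDxyL : ∀ y1 y2 : Vec d2, ‖Dxy i x y1 - Dxy i x y2‖ ≤ lg2 * ‖y1 - y2‖ := by
    intro y1 y2
    have h := hLg2xy i x y1 x y2
    rwa [hzero2 y1 y2] at h
  have hHyyL : ∀ y1 y2 : Vec d2, ‖Hyy i x y1 - Hyy i x y2‖ ≤ lg2 * ‖y1 - y2‖ := by
    intro y1 y2
    have h := hLg2yy i x y1 x y2
    rwa [hzero2 y1 y2] at h
  -- Step 5: monotonicity and coercivity
  have hmono : ∀ y1 y2 : Vec d2, μg * ‖y1 - y2‖ ^ 2 ≤ ⟪gyg i x y1 - gyg i x y2, y1 - y2⟫ := by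
    intro y1 y2
    have h1 := hsc i x y1 y2
    have h2 := hsc i x y2 y1
    have e1 : ⟪gyg i x y1, y2 - y1⟫ = -⟪gyg i x y1, y1 - y2⟫ := by
      rw [show y2 - y1 = -(y1 - y2) by abel, inner_neg_right]
    have e2 : ‖y2 - y1‖ = ‖y1 - y2‖ := norm_sub_rev _ _
    rw [e1, e2] at h2
    rw [inner_sub_left]
    nlinarith
  have hcoer : ∀ (y0 v : Vec d2), μg * ‖v‖ ^ 2 ≤ ⟪Hyy i x y0 v, v⟫ := by
    intro y0 v
    exact hessian_coercive μg (fun y' => gyg i x y') y0 (Hyy i x y0) (hHyy i x y0)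
      (fun y1 y2 => hmono y1 y2) v
  have hlower : ∀ (y0 v : Vec d2), μg * ‖v‖ ≤ ‖Hyy i x y0 v‖ := by
    intro y0 v
    rcases eq_or_ne v 0 with hv | hv
    · simp [hv]
    · have hvpos : 0 < ‖v‖ := norm_pos_iff.mpr hv
      have h1 := hcoer y0 v
      have h2 : ⟪Hyy i x y0 v, v⟫ ≤ ‖Hyy i x y0 v‖ * ‖v‖ := real_inner_le_norm _ _
      nlinarith
  -- Step 6: bound on Hinv
  have hHinvApp : ∀ (y0 : Vec d2) (w : Vec d2), ‖Hinv i x y0 w‖ ≤ μg⁻¹ * ‖w‖ := by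
    intro y0 w
    have hid : Hyy i x y0 (Hinv i x y0 w) = w := by
      have := (hHinv i x y0).1
      calc Hyy i x y0 (Hinv i x y0 w) = ((Hyy i x y0).comp (Hinv i x y0)) w := rfl
        _ = w := by rw [this]; rfl
    have h := hlower y0 (Hinv i x y0 w)
    rw [hid] at h
    calc ‖Hinv i x y0 w‖ = μg⁻¹ * (μg * ‖Hinv i x y0 w‖) := by field_simp
      _ ≤ μg⁻¹ * ‖w‖ := mul_le_mul_of_nonneg_left h hμ0
  have hHinvB : ∀ y0 : Vec d2, ‖Hinv i x y0‖ ≤ μg⁻¹ := by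
    intro y0
    exact ContinuousLinearMap.opNorm_le_bound _ hμ0 (hHinvApp y0)
  -- Step 7: difference formula and Lipschitz bound for Hinv
  have hinvdiff : Hinv i x y - Hinv i x z
      = (Hinv i x y).comp (((Hyy i x z) - (Hyy i x y)).comp (Hinv i x z)) := by
    ext w
    have h1 := (hHinv i x y).2
    have h2 := (hHinv i x z).1
    have e1 : Hyy i x z (Hinv i x z w) = w := by
      calc Hyy i x z (Hinv i x z w) = ((Hyy i x z).comp (Hinv i x z)) w := rfl
        _ = w := by rw [h2]; rfl
    have e2 : Hinv i x y (Hyy i x y (Hinv i x z w)) = Hinv i x z w := by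
      calc Hinv i x y (Hyy i x y (Hinv i x z w))
          = ((Hinv i x y).comp (Hyy i x y)) (Hinv i x z w) := rfl
        _ = Hinv i x z w := by rw [h1]; rfl
    simp only [ContinuousLinearMap.sub_apply, ContinuousLinearMap.comp_apply,
      ContinuousLinearMap.coe_sub', Pi.sub_apply, map_sub]
    rw [e1, e2]
  have hHinvL : ‖Hinv i x y - Hinv i x z‖ ≤ μg⁻¹ * (lg2 * Δ) * μg⁻¹ := by
    rw [hinvdiff]
    calc ‖(Hinv i x y).comp (((Hyy i x z) - (Hyy i x y)).comp (Hinv i x z))‖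
        ≤ ‖Hinv i x y‖ * ‖((Hyy i x z) - (Hyy i x y)).comp (Hinv i x z)‖ :=
          ContinuousLinearMap.opNorm_comp_le _ _
      _ ≤ ‖Hinv i x y‖ * (‖(Hyy i x z) - (Hyy i x y)‖ * ‖Hinv i x z‖) := by
          exact mul_le_mul_of_nonneg_left (ContinuousLinearMap.opNorm_comp_le _ _)
            (norm_nonneg _)
      _ ≤ μg⁻¹ * ((lg2 * Δ) * μg⁻¹) := by
          apply mul_le_mul (hHinvB y) _ (by positivity) hμ0
          apply mul_le_mul _ (hHinvB z) (norm_nonneg _) (by positivity)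
          have := hHyyL z y
          rwa [norm_sub_rev z y] at this
      _ = μg⁻¹ * (lg2 * Δ) * μg⁻¹ := by ring
  -- Step 8: assemble
  set A1 := ContinuousLinearMap.adjoint (Dxy i x y) with hA1
  set A2 := ContinuousLinearMap.adjoint (Dxy i x z) with hA2
  set B1 := Hinv i x y with hB1
  set B2 := Hinv i x z with hB2
  set v1 := gyf i x y with hv1
  set v2 := gyf i x z with hv2
  have hA1B : ‖A1‖ ≤ lg1 := by
    rw [hA1, LinearIsometryEquiv.norm_map]; exact hDxyB y
  have hAdiff : ‖A1 - A2‖ ≤ lg2 * Δ := by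
    rw [hA1, hA2, ← map_sub, LinearIsometryEquiv.norm_map]
    exact hDxyL y z
  have hsplit : barf i x y - barf i x z
      = (gxf i x y - gxf i x z)
        - (A1 (B1 (v1 - v2)) + A1 ((B1 - B2) v2) + (A1 - A2) (B2 v2)) := by
    have e1 : A1 (B1 (v1 - v2)) = A1 (B1 v1) - A1 (B1 v2) := by rw [map_sub, map_sub]
    have e2 : A1 ((B1 - B2) v2) = A1 (B1 v2) - A1 (B2 v2) := by
      rw [ContinuousLinearMap.sub_apply, map_sub]
    have e3 : (A1 - A2) (B2 v2) = A1 (B2 v2) - A2 (B2 v2) :=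
      ContinuousLinearMap.sub_apply _ _ _
    rw [hbarf i x y, hbarf i x z, ← hA1, ← hA2, ← hB1, ← hB2, ← hv1, ← hv2, e1, e2, e3]
    abel
  have t0 : ‖gxf i x y - gxf i x z‖ ≤ lf1 * Δ := hgxfL y z
  have t1 : ‖A1 (B1 (v1 - v2))‖ ≤ lg1 * (μg⁻¹ * (lf1 * Δ)) := by
    calc ‖A1 (B1 (v1 - v2))‖ ≤ ‖A1‖ * ‖B1 (v1 - v2)‖ := ContinuousLinearMap.le_opNorm _ _
      _ ≤ lg1 * (μg⁻¹ * (lf1 * Δ)) := by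
          apply mul_le_mul hA1B _ (norm_nonneg _) hlg1
          calc ‖B1 (v1 - v2)‖ ≤ μg⁻¹ * ‖v1 - v2‖ := hHinvApp y _
            _ ≤ μg⁻¹ * (lf1 * Δ) := mul_le_mul_of_nonneg_left (hgyfL y z) hμ0
  have t2 : ‖A1 ((B1 - B2) v2)‖ ≤ lg1 * ((μg⁻¹ * (lg2 * Δ) * μg⁻¹) * lf0) := by
    calc ‖A1 ((B1 - B2) v2)‖ ≤ ‖A1‖ * ‖(B1 - B2) v2‖ := ContinuousLinearMap.le_opNorm _ _
      _ ≤ lg1 * ((μg⁻¹ * (lg2 * Δ) * μg⁻¹) * lf0) := by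
          apply mul_le_mul hA1B _ (norm_nonneg _) hlg1
          calc ‖(B1 - B2) v2‖ ≤ ‖B1 - B2‖ * ‖v2‖ := ContinuousLinearMap.le_opNorm _ _
            _ ≤ (μg⁻¹ * (lg2 * Δ) * μg⁻¹) * lf0 :=
                mul_le_mul hHinvL (hgyfB z) (norm_nonneg _) (by positivity)
  have t3 : ‖(A1 - A2) (B2 v2)‖ ≤ (lg2 * Δ) * (μg⁻¹ * lf0) := by
    calc ‖(A1 - A2) (B2 v2)‖ ≤ ‖A1 - A2‖ * ‖B2 v2‖ := ContinuousLinearMap.le_opNorm _ _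
      _ ≤ (lg2 * Δ) * (μg⁻¹ * lf0) := by
          apply mul_le_mul hAdiff _ (norm_nonneg _) (by positivity)
          calc ‖B2 v2‖ ≤ μg⁻¹ * ‖v2‖ := hHinvApp z _
            _ ≤ μg⁻¹ * lf0 := mul_le_mul_of_nonneg_left (hgyfB z) hμ0
  have hnorm : ‖barf i x y - barf i x z‖
      ≤ ‖gxf i x y - gxf i x z‖
        + (‖A1 (B1 (v1 - v2))‖ + ‖A1 ((B1 - B2) v2)‖ + ‖(A1 - A2) (B2 v2)‖) := by
    rw [hsplit]
    calc ‖(gxf i x y - gxf i x z)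
          - (A1 (B1 (v1 - v2)) + A1 ((B1 - B2) v2) + (A1 - A2) (B2 v2))‖
        ≤ ‖gxf i x y - gxf i x z‖
          + ‖A1 (B1 (v1 - v2)) + A1 ((B1 - B2) v2) + (A1 - A2) (B2 v2)‖ := norm_sub_le _ _
      _ ≤ _ := by
          gcongr
          exact le_trans (norm_add_le _ _)
            (add_le_add (norm_add_le _ _) le_rfl)
  have hfinal : lf1 * Δ + (lg1 * (μg⁻¹ * (lf1 * Δ))
      + lg1 * ((μg⁻¹ * (lg2 * Δ) * μg⁻¹) * lf0) + (lg2 * Δ) * (μg⁻¹ * lf0)) = Mf * Δ := by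
    rw [hMf]
    field_simp
    ring
  linarith [hnorm, t0, t1, t2, t3, hfinal.ge, hfinal.le]

end
end
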